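/- Let b be a fixed-point-free homeomorphism of ℂ satisfying τ ∘ b ∘ τ⁻¹ = b⁻¹, where τ(z) = z + 1. Then for every path γ : [0,1] → ℂ with γ(1) = b(γ(0)) + 1 (i.e. joining a point to its image under τ ∘ b), the angular variation of b along γ lies in ℤ + 1/2, and this half-integer is the same for all such paths γ (it is denoted I(b, τ)). -/

import Mathlib

open Complex Set Topology

lemma aux_glue {α β : Type*} [TopologicalSpace α] [TopologicalSpace β] {f : α → β}
    {s t : Set α} (hs : IsClosed s) (ht : IsClosed t)
    (hfs : ContinuousOn f s) (hft : ContinuousOn f t) : ContinuousOn f (s ∪ t) := by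
  intro x hx
  have hcwa : ∀ {u : Set α}, IsClosed u → ContinuousOn f u → ContinuousWithinAt f u x := by
    intro u hu hfu
    rcases Classical.em (x ∈ u) with hxu | hxu
    · exact hfu x hxu
    · exact continuousWithinAt_of_notMem_closure (by rwa [hu.closure_eq])
  rw [ContinuousWithinAt, nhdsWithin_union]
  exact Filter.Tendsto.sup (hcwa hs hfs) (hcwa ht hft)

/-- Integer-valued continuous function on a preconnected set takes equal values. -/
lemma aux_int_const {α : Type*} [TopologicalSpace α] {f : α → ℝ} {s : Set α}
    (hs : IsPreconnected s) (hf : ContinuousOn f s) (hint : ∀ x ∈ s, ∃ k : ℤ, f x = k)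
    {x y : α} (hx : x ∈ s) (hy : y ∈ s) : f x = f y := by
  have key : ∀ u ∈ s, ∀ w ∈ s, ¬ f u < f w := by
    intro u hu w hw hlt
    obtain ⟨k, hk⟩ := hint u hu
    obtain ⟨m, hm⟩ := hint w hw
    have hkm : (k : ℝ) + 1 ≤ m := by
      have : k < m := by rw [hk, hm] at hlt; exact_mod_cast hlt
      exact_mod_cast this
    have hmem : (k : ℝ) + 1/2 ∈ Icc (f u) (f w) := by
      constructor
      · rw [hk]; linarith
      · rw [hm]; linarith
    obtain ⟨z, hz, hzv⟩ := hs.intermediate_value hu hw hf hmem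
    obtain ⟨j, hj⟩ := hint z hz
    rw [hj] at hzv
    have hcast : ((j - k : ℤ) : ℝ) = 1/2 := by push_cast; linarith
    rcases le_or_gt (j - k) 0 with h0 | h0
    · have : ((j - k : ℤ) : ℝ) ≤ 0 := by exact_mod_cast h0
      linarith
    · have : (1 : ℝ) ≤ ((j - k : ℤ) : ℝ) := by exact_mod_cast h0
      linarith
  rcases lt_trichotomy (f x) (f y) with h | h | h
  · exact absurd h (key x hx y hy)
  · exact h
  · exact absurd h (key y hy x hx)

lemma aux_ratio_slit {w₀ w : ℂ} (h : ‖w - w₀‖ < ‖w₀‖) : w / w₀ ∈ slitPlane := by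
  have hw₀ : w₀ ≠ 0 := by
    intro h0
    rw [h0] at h
    simp at h
    have : (0:ℝ) ≤ ‖w‖ := norm_nonneg _
    linarith
  have hd : w / w₀ - 1 = (w - w₀) / w₀ := by field_simp
  have hlt : ‖w / w₀ - 1‖ < 1 := by
    rw [hd, norm_div]
    rw [div_lt_one (norm_pos_iff.mpr hw₀)]
    exact h
  rw [Complex.mem_slitPlane_iff]
  left
  have hre : |(w / w₀ - 1).re| ≤ ‖w / w₀ - 1‖ := Complex.abs_re_le_norm _
  have : (w / w₀ - 1).re = (w / w₀).re - 1 := by simp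
  rw [this] at hre
  have := abs_lt.mp (lt_of_le_of_lt hre hlt)
  linarith [this.1]

lemma aux_exists_clog_Icc (g : ℝ → ℂ) (hg : Continuous g) (hne : ∀ t, g t ≠ 0) (a b : ℝ) :
    ∃ L : ℝ → ℂ, ContinuousOn L (Icc a b) ∧ ∀ t ∈ Icc a b, Complex.exp (L t) = g t := by
  rcases lt_or_ge b a with hab | hab
  · refine ⟨fun _ => 0, ?_, ?_⟩ <;> simp [Set.Icc_eq_empty_of_lt hab]
  obtain ⟨t₀, ht₀K, ht₀min⟩ := isCompact_Icc.exists_isMinOn (Set.nonempty_Icc.mpr hab)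
      (hg.norm.continuousOn (s := Icc a b))
  set m := ‖g t₀‖ with hm
  have hmpos : 0 < m := norm_pos_iff.mpr (hne t₀)
  have hmle : ∀ t ∈ Icc a b, m ≤ ‖g t‖ := fun t ht => isMinOn_iff.mp ht₀min t ht
  obtain ⟨δ, hδpos, hδ⟩ := (Metric.uniformContinuousOn_iff).mp
      (isCompact_Icc.uniformContinuousOn_of_continuous hg.continuousOn) m hmpos
  set c : ℕ → ℝ := fun k => min b (a + k * (δ/2)) with hc
  have hc0 : c 0 = a := by simp [hc, min_eq_right hab]
  have hcmono : ∀ k : ℕ, c k ≤ c (k+1) := by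
    intro k
    apply min_le_min le_rfl
    have : (k:ℝ) ≤ (k:ℝ)+1 := by linarith
    push_cast
    nlinarith [hδpos]
  have hcK : ∀ k : ℕ, c k ∈ Icc a b := by
    intro k
    refine ⟨le_min hab ?_, min_le_left _ _⟩
    have : (0:ℝ) ≤ (k:ℝ) * (δ/2) := by positivity
    linarith
  have hstep : ∀ k : ℕ, c (k+1) - c k < δ := by
    intro k
    rcases le_total b (a + (k:ℝ) * (δ/2)) with h | h
    · have h1 : c k = b := min_eq_left h
      have h2 : c (k+1) ≤ b := min_le_left _ _
      rw [h1]; linarith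
    · have h1 : c k = a + (k:ℝ) * (δ/2) := min_eq_right h
      have h2 : c (k+1) ≤ a + ((k:ℕ)+1 : ℕ) * (δ/2) := min_le_right _ _
      rw [h1]; push_cast at h2 ⊢; linarith
  have main : ∀ k : ℕ, ∃ L : ℝ → ℂ, ContinuousOn L (Icc a (c k)) ∧
      ∀ t ∈ Icc a (c k), Complex.exp (L t) = g t := by
    intro k
    induction k with
    | zero =>
      refine ⟨fun _ => Complex.log (g a), continuousOn_const, ?_⟩
      intro t ht
      rw [hc0] at ht
      have : t = a := le_antisymm ht.2 ht.1
      rw [this]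
      exact Complex.exp_log (hne a)
    | succ k ih =>
      obtain ⟨L, hLc, hLe⟩ := ih
      have hck : c k ∈ Icc a b := hcK k
      have hratio : ∀ t ∈ Icc (c k) (c (k+1)), ‖g t - g (c k)‖ < m := by
        intro t ht
        have h1 : t ∈ Icc a b := ⟨le_trans hck.1 ht.1, le_trans ht.2 (hcK (k+1)).2⟩
        have h2 : dist t (c k) < δ := by
          rw [Real.dist_eq, _root_.abs_of_nonneg (by linarith [ht.1])]
          linarith [ht.2, hstep k]
        have := hδ t h1 (c k) hck h2
        rwa [dist_eq_norm] at this
      set L' : ℝ → ℂ := fun t => if t ≤ c k then L t else L (c k) + Complex.log (g t / g (c k))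
        with hL'
      have hagree : ∀ t ∈ Icc (c k) (c (k+1)),
          L' t = L (c k) + Complex.log (g t / g (c k)) := by
        intro t ht
        by_cases h : t ≤ c k
        · have : t = c k := le_antisymm h ht.1
          subst this
          rw [div_self (hne (c k)), Complex.log_one]
          simp [hL']
        · simp [hL', h]
      have hslit : ∀ t ∈ Icc (c k) (c (k+1)), g t / g (c k) ∈ slitPlane := by
        intro t ht
        exact aux_ratio_slit (lt_of_lt_of_le (hratio t ht) (hmle _ hck))
      have hcont2 : ContinuousOn L' (Icc (c k) (c (k+1))) := by
        refine ContinuousOn.congr ?_ hagree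
        exact continuousOn_const.add (ContinuousOn.clog ((hg.continuousOn).div_const _) hslit)
      have hcont1 : ContinuousOn L' (Icc a (c k)) := by
        apply hLc.congr
        intro t ht
        simp [hL', ht.2]
      have hunion : Icc a (c (k+1)) = Icc a (c k) ∪ Icc (c k) (c (k+1)) :=
        (Set.Icc_union_Icc_eq_Icc hck.1 (hcmono k)).symm
      refine ⟨L', by rw [hunion]; exact aux_glue isClosed_Icc isClosed_Icc hcont1 hcont2, ?_⟩
      intro t ht
      rw [hunion] at ht
      rcases ht with ht | ht
      · rw [show L' t = L t from by simp [hL', ht.2]]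
        exact hLe t ht
      · rw [hagree t ht, Complex.exp_add, Complex.exp_log (div_ne_zero (hne t) (hne (c k))),
          hLe (c k) ⟨hck.1, le_refl _⟩]
        rw [mul_comm, div_mul_cancel₀ _ (hne (c k))]
  obtain ⟨N, hN⟩ := exists_nat_gt ((b - a) / (δ/2))
  have hcN : c N = b := by
    apply min_eq_left
    rw [div_lt_iff₀ (by linarith)] at hN
    linarith
  obtain ⟨L, h1, h2⟩ := main N
  rw [hcN] at h1 h2
  exact ⟨L, h1, h2⟩

lemma aux_exists_clog_square (g : ℂ → ℂ) (hg : Continuous g) (hne : ∀ z, g z ≠ 0) (R : ℝ) :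
    ∃ L : ℂ → ℂ, ContinuousOn L {z : ℂ | z.re ∈ Icc (-R) R ∧ z.im ∈ Icc (-R) R} ∧
      ∀ z : ℂ, z.re ∈ Icc (-R) R → z.im ∈ Icc (-R) R → Complex.exp (L z) = g z := by
  rcases lt_or_ge R 0 with hR | hR
  · have hemp : Icc (-R) R = (∅ : Set ℝ) := Set.Icc_eq_empty_of_lt (by linarith)
    refine ⟨fun _ => 0, ?_, ?_⟩
    · have : {z : ℂ | z.re ∈ Icc (-R) R ∧ z.im ∈ Icc (-R) R} = ∅ := by
        ext z; simp [hemp]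
      rw [this]
      exact continuousOn_empty _
    · intro z h1 _
      rw [hemp] at h1
      exact absurd h1 (Set.notMem_empty _)
  have hRR : -R ≤ R := by linarith
  set Qs : ℝ → Set ℂ := fun c => {z : ℂ | z.re ∈ Icc (-R) c ∧ z.im ∈ Icc (-R) R} with hQs
  have hQclosed : ∀ c, IsClosed (Qs c) := by
    intro c
    exact (isClosed_Icc.preimage Complex.continuous_re).inter
      (isClosed_Icc.preimage Complex.continuous_im)
  have hQcompact : IsCompact (Qs R) := by
    refine Metric.isCompact_of_isClosed_isBounded (hQclosed R) ?_
    rw [isBounded_iff_forall_norm_le]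
    refine ⟨R + R, ?_⟩
    rintro z ⟨h1, h2⟩
    calc ‖z‖ ≤ |z.re| + |z.im| := Complex.norm_le_abs_re_add_abs_im z
    _ ≤ R + R := add_le_add (abs_le.mpr ⟨h1.1, h1.2⟩) (abs_le.mpr ⟨h2.1, h2.2⟩)
  have hQne : (Qs R).Nonempty := ⟨((-R : ℝ) : ℂ), by simp [hQs, hRR, hR]⟩
  obtain ⟨z₀, hz₀K, hz₀min⟩ := hQcompact.exists_isMinOn hQne (hg.norm.continuousOn (s := Qs R))
  set m := ‖g z₀‖ with hm
  have hmpos : 0 < m := norm_pos_iff.mpr (hne z₀)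
  have hmle : ∀ z ∈ Qs R, m ≤ ‖g z‖ := fun z hz => isMinOn_iff.mp hz₀min z hz
  obtain ⟨δ, hδpos, hδ⟩ := (Metric.uniformContinuousOn_iff).mp
      (hQcompact.uniformContinuousOn_of_continuous hg.continuousOn) m hmpos
  set c : ℕ → ℝ := fun k => min R (-R + k * (δ/2)) with hc
  have hc0 : c 0 = -R := by simp [hc, min_eq_right hRR]
  have hcmono : ∀ k : ℕ, c k ≤ c (k+1) := by
    intro k
    apply min_le_min le_rfl
    push_cast
    nlinarith [hδpos]
  have hcK : ∀ k : ℕ, c k ∈ Icc (-R) R := by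
    intro k
    refine ⟨le_min hRR ?_, min_le_left _ _⟩
    have : (0:ℝ) ≤ (k:ℝ) * (δ/2) := by positivity
    linarith
  have hstep : ∀ k : ℕ, c (k+1) - c k < δ := by
    intro k
    rcases le_total R (-R + (k:ℝ) * (δ/2)) with h | h
    · have h1 : c k = R := min_eq_left h
      have h2 : c (k+1) ≤ R := min_le_left _ _
      rw [h1]; linarith
    · have h1 : c k = -R + (k:ℝ) * (δ/2) := min_eq_right h
      have h2 : c (k+1) ≤ -R + ((k:ℕ)+1 : ℕ) * (δ/2) := min_le_right _ _
      rw [h1]; push_cast at h2 ⊢; linarith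
  have hQsub : ∀ k : ℕ, Qs (c k) ⊆ Qs R := by
    intro k z hz
    exact ⟨⟨hz.1.1, le_trans hz.1.2 (hcK k).2⟩, hz.2⟩
  have main : ∀ k : ℕ, ∃ L : ℂ → ℂ, ContinuousOn L (Qs (c k)) ∧
      ∀ z ∈ Qs (c k), Complex.exp (L z) = g z := by
    intro k
    induction k with
    | zero =>
      obtain ⟨L0, hL0c, hL0e⟩ := aux_exists_clog_Icc (fun y : ℝ => g (((-R : ℝ) : ℂ) + (y : ℂ) * I))
        (hg.comp (continuous_const.add (Complex.continuous_ofReal.mul continuous_const)))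
        (fun y => hne _) (-R) R
      refine ⟨fun z => L0 z.im, ?_, ?_⟩
      · rw [hc0]
        refine ContinuousOn.comp hL0c Complex.continuous_im.continuousOn ?_
        intro z hz
        exact hz.2
      · rw [hc0]
        rintro z ⟨h1, h2⟩
        have hzre : z.re = -R := le_antisymm h1.2 h1.1
        have hzeq : ((-R : ℝ) : ℂ) + (z.im : ℂ) * I = z := by
          apply Complex.ext <;> simp [hzre]
        rw [hL0e z.im h2, hzeq]
    | succ k ih =>
      obtain ⟨L, hLc, hLe⟩ := ih
      set e : ℂ → ℂ := fun z => ((c k : ℝ) : ℂ) + (z.im : ℂ) * I with he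
      have hecont : Continuous e :=
        continuous_const.add ((Complex.continuous_ofReal.comp Complex.continuous_im).mul
          continuous_const)
      have here : ∀ z, (e z).re = c k := by intro z; simp [he]
      have heim : ∀ z, (e z).im = z.im := by intro z; simp [he]
      set S : Set ℂ := {z : ℂ | z.re ∈ Icc (c k) (c (k+1)) ∧ z.im ∈ Icc (-R) R} with hS
      have hSclosed : IsClosed S :=
        (isClosed_Icc.preimage Complex.continuous_re).inter
          (isClosed_Icc.preimage Complex.continuous_im)
      have heQ : ∀ z ∈ S, e z ∈ Qs (c k) := by
        rintro z ⟨h1, h2⟩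
        refine ⟨?_, ?_⟩
        · rw [here z]; exact ⟨(hcK k).1, le_refl _⟩
        · rw [heim z]; exact h2
      have heK : ∀ z ∈ S, e z ∈ Qs R := fun z hz => hQsub k (heQ z hz)
      have hzK : ∀ z ∈ S, z ∈ Qs R := by
        rintro z ⟨h1, h2⟩
        exact ⟨⟨le_trans (hcK k).1 h1.1, le_trans h1.2 (hcK (k+1)).2⟩, h2⟩
      have hdist : ∀ z ∈ S, dist z (e z) < δ := by
        rintro z hz
        have hsub : z - e z = ((z.re - c k : ℝ) : ℂ) := by
          apply Complex.ext <;> simp [he]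
        rw [dist_eq_norm, hsub]
        have : ‖((z.re - c k : ℝ) : ℂ)‖ = |z.re - c k| := Complex.norm_real _
        rw [this, _root_.abs_of_nonneg (by linarith [hz.1.1])]
        linarith [hz.1.2, hstep k]
      have hratio : ∀ z ∈ S, ‖g z - g (e z)‖ < m := by
        intro z hz
        have := hδ z (hzK z hz) (e z) (heK z hz) (hdist z hz)
        rwa [dist_eq_norm] at this
      have hslit : ∀ z ∈ S, g z / g (e z) ∈ slitPlane := by
        intro z hz
        exact aux_ratio_slit (lt_of_lt_of_le (hratio z hz) (hmle _ (heK z hz)))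
      set L' : ℂ → ℂ := fun z => if z.re ≤ c k then L z else
        L (e z) + Complex.log (g z / g (e z)) with hL'
      have hagree : ∀ z ∈ S, L' z = L (e z) + Complex.log (g z / g (e z)) := by
        intro z hz
        by_cases h : z.re ≤ c k
        · have hzre : z.re = c k := le_antisymm h hz.1.1
          have hez : e z = z := by apply Complex.ext <;> simp [he, hzre]
          rw [hez, div_self (hne z), Complex.log_one]
          simp [hL', h]
        · simp [hL', h]
      have hcont2 : ContinuousOn L' S := by
        refine ContinuousOn.congr ?_ hagree
        refine ContinuousOn.add ?_ ?_
        · exact ContinuousOn.comp hLc hecont.continuousOn heQ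
        · exact ContinuousOn.clog (ContinuousOn.div hg.continuousOn
            (hg.comp hecont).continuousOn (fun z _ => hne (e z))) hslit
      have hcont1 : ContinuousOn L' (Qs (c k)) := by
        apply hLc.congr
        intro z hz
        simp [hL', hz.1.2]
      have hunion : Qs (c (k+1)) = Qs (c k) ∪ S := by
        ext z
        simp only [hQs, hS, mem_setOf_eq, mem_union, mem_Icc]
        constructor
        · rintro ⟨⟨h1, h2⟩, h3⟩
          rcases le_total z.re (c k) with h | h
          · exact Or.inl ⟨⟨h1, h⟩, h3⟩
          · exact Or.inr ⟨⟨h, h2⟩, h3⟩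
        · rintro (⟨⟨h1, h2⟩, h3⟩ | ⟨⟨h1, h2⟩, h3⟩)
          · exact ⟨⟨h1, le_trans h2 (hcmono k)⟩, h3⟩
          · exact ⟨⟨le_trans (hcK k).1 h1, h2⟩, h3⟩
      refine ⟨L', by rw [hunion]; exact aux_glue (hQclosed (c k)) hSclosed hcont1 hcont2, ?_⟩
      intro z hz
      rw [hunion] at hz
      rcases hz with hz | hz
      · rw [show L' z = L z from by simp [hL', hz.1.2]]
        exact hLe z hz
      · rw [hagree z hz, Complex.exp_add, Complex.exp_log (div_ne_zero (hne z) (hne (e z))),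
          hLe (e z) (heQ z hz)]
        rw [mul_comm, div_mul_cancel₀ _ (hne (e z))]
  obtain ⟨N, hN⟩ := exists_nat_gt ((R - -R) / (δ/2))
  have hcN : c N = R := by
    apply min_eq_left
    rw [div_lt_iff₀ (by linarith)] at hN
    linarith
  obtain ⟨L, h1, h2⟩ := main N
  rw [hcN] at h1 h2
  exact ⟨L, h1, fun z hz1 hz2 => h2 z ⟨hz1, hz2⟩⟩

lemma aux_half (v : ℂ → ℂ) (hvne : ∀ z, v z ≠ 0) (F : ℂ → ℂ) (hvF : ∀ z, v (F z) = - v z)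
    (γ : ℝ → ℂ) (θ : ℝ → ℝ) (hγ1 : γ 1 = F (γ 0))
    (hl : ∀ t ∈ Set.Icc (0:ℝ) 1, v (γ t) =
      (‖v (γ t)‖ : ℂ) * Complex.exp (2 * Real.pi * Complex.I * (θ t : ℂ))) :
    ∃ k : ℤ, θ 1 - θ 0 = (k : ℝ) + 1/2 := by
  have h0 := hl 0 (by norm_num)
  have h1 := hl 1 (by norm_num)
  rw [hγ1, hvF, norm_neg] at h1
  nth_rewrite 1 [h0] at h1
  have hA : ((‖v (γ 0)‖ : ℝ) : ℂ) ≠ 0 := by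
    simp only [ne_eq, Complex.ofReal_eq_zero]
    exact norm_ne_zero_iff.mpr (hvne _)
  have hcancel : Complex.exp (2 * Real.pi * Complex.I * (θ 1 : ℂ)) =
      Complex.exp (2 * Real.pi * Complex.I * (θ 0 : ℂ) + Real.pi * Complex.I) := by
    apply mul_left_cancel₀ hA
    rw [Complex.exp_add, Complex.exp_pi_mul_I]
    rw [← h1]
    ring
  obtain ⟨n, hn⟩ := Complex.exp_eq_exp_iff_exists_int.mp hcancel
  have hπI : ((Real.pi : ℂ) * Complex.I) ≠ 0 :=
    mul_ne_zero (Complex.ofReal_ne_zero.mpr Real.pi_ne_zero) Complex.I_ne_zero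
  have hred : ((2 * θ 1 : ℝ) : ℂ) = ((2 * θ 0 + 1 + 2 * (n:ℝ) : ℝ) : ℂ) := by
    apply mul_left_cancel₀ hπI
    push_cast
    linear_combination hn
  have : (2 * θ 1 : ℝ) = 2 * θ 0 + 1 + 2 * (n:ℝ) := by exact_mod_cast hred
  exact ⟨n, by linarith⟩

lemma aux_key (v : ℂ → ℂ) (hvcont : Continuous v) (hvne : ∀ z, v z ≠ 0)
    (F : ℂ → ℂ) (hFcont : Continuous F) (hvF : ∀ z, v (F z) = - v z)
    (γ γ' : ℝ → ℂ) (θ θ' : ℝ → ℝ)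
    (hγc : ContinuousOn γ (Icc 0 1)) (hγ1 : γ 1 = F (γ 0)) (hθc : ContinuousOn θ (Icc 0 1))
    (hl : ∀ t ∈ Icc (0:ℝ) 1, v (γ t) =
      (‖v (γ t)‖ : ℂ) * Complex.exp (2 * Real.pi * Complex.I * (θ t : ℂ)))
    (hγc' : ContinuousOn γ' (Icc 0 1)) (hγ1' : γ' 1 = F (γ' 0))
    (hθc' : ContinuousOn θ' (Icc 0 1))
    (hl' : ∀ t ∈ Icc (0:ℝ) 1, v (γ' t) =
      (‖v (γ' t)‖ : ℂ) * Complex.exp (2 * Real.pi * Complex.I * (θ' t : ℂ))) :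
    θ 1 - θ 0 = θ' 1 - θ' 0 := by
  have hπ : (0:ℝ) < Real.pi := Real.pi_pos
  -- the compact region
  set S : Set ℂ := segment ℝ (γ 0) (γ' 0) with hS
  have hScomp : IsCompact S := by
    rw [hS, segment_eq_image']
    refine isCompact_Icc.image_of_continuousOn (Continuous.continuousOn ?_)
    exact continuous_const.add (continuous_id.smul continuous_const)
  have hC1 : IsCompact (γ '' Icc 0 1) := isCompact_Icc.image_of_continuousOn hγc
  have hC2 : IsCompact (γ' '' Icc 0 1) := isCompact_Icc.image_of_continuousOn hγc'
  have hC3 : IsCompact (F '' S) := hScomp.image hFcont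
  set C : Set ℂ := γ '' Icc 0 1 ∪ γ' '' Icc 0 1 ∪ S ∪ F '' S with hC
  have hCcomp : IsCompact C := ((hC1.union hC2).union hScomp).union hC3
  obtain ⟨M, hM⟩ := isBounded_iff_forall_norm_le.mp hCcomp.isBounded
  set Q : Set ℂ := {z : ℂ | z.re ∈ Icc (-M) M ∧ z.im ∈ Icc (-M) M} with hQ
  have hCQ : ∀ z ∈ C, z ∈ Q := by
    intro z hz
    have h1 := hM z hz
    have h2 : |z.re| ≤ M := le_trans (Complex.abs_re_le_norm z) h1
    have h3 : |z.im| ≤ M := le_trans (Complex.abs_im_le_norm z) h1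
    exact ⟨⟨(abs_le.mp h2).1, (abs_le.mp h2).2⟩, ⟨(abs_le.mp h3).1, (abs_le.mp h3).2⟩⟩
  obtain ⟨L, hLc, hLe⟩ := aux_exists_clog_square v hvcont hvne M
  have hLQ : ∀ z ∈ Q, Complex.exp (L z) = v z := fun z hz => hLe z hz.1 hz.2
  set φ : ℂ → ℝ := fun p => ((L (F p)).im - (L p).im) / (2 * Real.pi) with hφ
  -- the variation of any admissible lift equals φ of the starting point
  have hvar : ∀ (g : ℝ → ℂ) (h : ℝ → ℝ), ContinuousOn g (Icc 0 1) → g 1 = F (g 0) →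
      ContinuousOn h (Icc 0 1) →
      (∀ t ∈ Icc (0:ℝ) 1, v (g t) =
        (‖v (g t)‖ : ℂ) * Complex.exp (2 * Real.pi * Complex.I * (h t : ℂ))) →
      (∀ t ∈ Icc (0:ℝ) 1, g t ∈ Q) →
      h 1 - h 0 = φ (g 0) := by
    intro g h hgc hg1 hhc hhl hgQ
    set d : ℝ → ℝ := fun t => h t - (L (g t)).im / (2 * Real.pi) with hd
    have hdc : ContinuousOn d (Icc 0 1) := by
      refine hhc.sub ?_
      exact (Complex.continuous_im.comp_continuousOn (hLc.comp hgc hgQ)).div_const _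
    have hdint : ∀ t ∈ Icc (0:ℝ) 1, ∃ k : ℤ, d t = k := by
      intro t ht
      have h1 : Complex.exp (L (g t)) = v (g t) := hLQ _ (hgQ t ht)
      have h2 := hhl t ht
      have hA : (0:ℝ) < ‖v (g t)‖ := norm_pos_iff.mpr (hvne _)
      have h3 : ((‖v (g t)‖ : ℝ) : ℂ) = Complex.exp ((Real.log ‖v (g t)‖ : ℝ) : ℂ) := by
        rw [← Complex.ofReal_exp, Real.exp_log hA]
      rw [h3, ← Complex.exp_add] at h2
      rw [h2] at h1
      obtain ⟨k, hk⟩ := Complex.exp_eq_exp_iff_exists_int.mp h1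
      refine ⟨-k, ?_⟩
      have him := congrArg Complex.im hk
      simp only [Complex.add_im, Complex.mul_im, Complex.mul_re, Complex.ofReal_im,
        Complex.ofReal_re, Complex.I_im, Complex.I_re, Complex.intCast_im, Complex.intCast_re,
        Complex.re_ofNat, Complex.im_ofNat] at him
      rw [hd]
      push_cast
      have h2π : (2 * Real.pi) ≠ 0 := by positivity
      field_simp
      ring_nf
      ring_nf at him
      linarith [him]
    have hconst : d 1 = d 0 :=
      aux_int_const isPreconnected_Icc hdc hdint (by norm_num) (by norm_num)
    have hd10 : h 1 - h 0 = (L (g 1)).im / (2 * Real.pi) - (L (g 0)).im / (2 * Real.pi) := by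
      have h1 : h 1 - (L (g 1)).im / (2 * Real.pi) = h 0 - (L (g 0)).im / (2 * Real.pi) := hconst
      linarith
    rw [hd10, hg1, hφ]
    ring
  -- φ is constant along the segment S
  have hSQ : ∀ z ∈ S, z ∈ Q := fun z hz => hCQ z (Or.inl (Or.inr hz))
  have hFSQ : ∀ z ∈ S, F z ∈ Q := fun z hz => hCQ _ (Or.inr ⟨z, hz, rfl⟩)
  have hφconst : φ (γ 0) = φ (γ' 0) := by
    have hint : ∀ p ∈ S, ∃ k : ℤ, φ p - 1/2 = k := by
      intro p hp
      have h1 : Complex.exp (L (F p)) = v (F p) := hLQ _ (hFSQ p hp)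
      have h2 : Complex.exp (L p) = v p := hLQ _ (hSQ p hp)
      rw [hvF] at h1
      have h3 : Complex.exp (L (F p)) = Complex.exp (L p + Real.pi * Complex.I) := by
        rw [Complex.exp_add, Complex.exp_pi_mul_I, h1, h2]
        ring
      obtain ⟨k, hk⟩ := Complex.exp_eq_exp_iff_exists_int.mp h3
      refine ⟨k, ?_⟩
      have him := congrArg Complex.im hk
      simp only [Complex.add_im, Complex.mul_im, Complex.mul_re, Complex.ofReal_im,
        Complex.ofReal_re, Complex.I_im, Complex.I_re, Complex.intCast_im, Complex.intCast_re,
        Complex.re_ofNat, Complex.im_ofNat] at him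
      rw [hφ]
      have h2π : (2 * Real.pi) ≠ 0 := by positivity
      field_simp
      ring_nf
      ring_nf at him
      linarith [him]
    have hφc : ContinuousOn (fun p => φ p - 1/2) S := by
      refine ContinuousOn.sub ?_ continuousOn_const
      rw [hφ]
      refine ContinuousOn.div_const ?_ _
      refine ContinuousOn.sub ?_ ?_
      · exact Complex.continuous_im.comp_continuousOn (hLc.comp hFcont.continuousOn hFSQ)
      · exact Complex.continuous_im.comp_continuousOn (hLc.mono hSQ)
    have := aux_int_const (convex_segment (γ 0) (γ' 0)).isPreconnected hφc hint
      (left_mem_segment ℝ (γ 0) (γ' 0)) (right_mem_segment ℝ (γ 0) (γ' 0))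
    linarith
  have hγQ : ∀ t ∈ Icc (0:ℝ) 1, γ t ∈ Q := fun t ht => hCQ _ (Or.inl (Or.inl (Or.inl ⟨t, ht, rfl⟩)))
  have hγQ' : ∀ t ∈ Icc (0:ℝ) 1, γ' t ∈ Q :=
    fun t ht => hCQ _ (Or.inl (Or.inl (Or.inr ⟨t, ht, rfl⟩)))
  rw [hvar γ θ hγc hγ1 hθc hl hγQ, hvar γ' θ' hγc' hγ1' hθc' hl' hγQ', hφconst]

/-- Let `b` be a fixed-point-free homeomorphism of `ℂ` with `τ ∘ b ∘ τ⁻¹ = b⁻¹`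
where `τ(z) = z + 1`. Then there is a single half-integer `n + 1/2` (the index
`I(b, τ)`) such that for every path `γ : [0,1] → ℂ` with `γ(1) = b(γ(0)) + 1`,
the angular variation of `b` along `γ` — i.e. `θ(1) - θ(0)` for any continuous
lift `θ` with `b(γ(t)) - γ(t) = |b(γ(t)) - γ(t)|·e^{2πiθ(t)}` — equals
`n + 1/2`. -/
theorem index_of_anticommuting_homeo_is_half_integer
    (b : ℂ ≃ₜ ℂ) (hb_free : ∀ z, b z ≠ z)
    (hanti : ∀ z, b (z - 1) + 1 = b.symm z) :
    ∃ n : ℤ, ∀ γ : ℝ → ℂ, ContinuousOn γ (Set.Icc 0 1) → γ 1 = b (γ 0) + 1 →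
      ∀ θ : ℝ → ℝ, ContinuousOn θ (Set.Icc 0 1) →
        (∀ t ∈ Set.Icc (0 : ℝ) 1,
          b (γ t) - γ t = (‖b (γ t) - γ t‖ : ℂ) *
            Complex.exp (2 * Real.pi * Complex.I * (θ t : ℂ))) →
        θ 1 - θ 0 = (n : ℝ) + 1 / 2 := by
  have hvcont : Continuous (fun z : ℂ => b z - z) := b.continuous.sub continuous_id
  have hvne : ∀ z, (fun z : ℂ => b z - z) z ≠ 0 := fun z => sub_ne_zero.mpr (hb_free z)
  have hFcont : Continuous (fun z : ℂ => b z + 1) := b.continuous.add continuous_const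
  have hvF : ∀ z, (fun z : ℂ => b z - z) ((fun z : ℂ => b z + 1) z) =
      - (fun z : ℂ => b z - z) z := by
    intro z
    simp only
    have h1 : b z + 1 = b.symm (z + 1) := by
      have h := hanti (z + 1)
      simpa using h
    rw [h1, Homeomorph.apply_symm_apply, ← h1]
    ring
  by_cases hex : ∃ γ : ℝ → ℂ, ∃ θ : ℝ → ℝ, ContinuousOn γ (Set.Icc 0 1) ∧ γ 1 = b (γ 0) + 1 ∧
      ContinuousOn θ (Set.Icc 0 1) ∧ ∀ t ∈ Set.Icc (0:ℝ) 1,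
        b (γ t) - γ t = (‖b (γ t) - γ t‖ : ℂ) * Complex.exp (2 * Real.pi * Complex.I * (θ t : ℂ))
  · obtain ⟨γ₀, θ₀, hγ₀c, hγ₀1, hθ₀c, hθ₀l⟩ := hex
    obtain ⟨k, hk⟩ := aux_half (fun z : ℂ => b z - z) hvne (fun z : ℂ => b z + 1) hvF γ₀ θ₀
      hγ₀1 hθ₀l
    refine ⟨k, ?_⟩
    intro γ hγc hγ1 θ hθc hlift
    have heq := aux_key (fun z : ℂ => b z - z) hvcont hvne (fun z : ℂ => b z + 1) hFcont hvF
      γ γ₀ θ θ₀ hγc hγ1 hθc hlift hγ₀c hγ₀1 hθ₀c hθ₀l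
    rw [heq, hk]
  · refine ⟨0, ?_⟩
    intro γ hγc hγ1 θ hθc hlift
    exact absurd ⟨γ, θ, hγc, hγ1, hθc, hlift⟩ hex
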